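/- Let V ⊂ ℝ[t] be a finite-dimensional linear subspace, I ⊆ ℝ a non-degenerate closed interval, and P = {f ∈ V : f ≥ 0 on I}, a closed pointed convex cone. For 0 ≠ f ∈ P, if I is compact then the linear span of the supporting face of f in P equals W_f = {g ∈ V : ord_s(g) ≥ ord_s(f) for all s ∈ I}, where ord_s denotes the order of vanishing at s. -/

import Mathlib

open Polynomial Filter Topology

/-- A face of a convex cone `C`: a subcone `F ⊆ C` such that whenever a sum of two
elements of `C` lies in `F`, both summands lie in `F`. -/
def IsFace (C F : Set (Polynomial ℝ)) : Prop :=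
  F ⊆ C ∧ (∀ c : ℝ, 0 ≤ c → ∀ x ∈ F, c • x ∈ F) ∧
    (∀ x ∈ F, ∀ y ∈ F, x + y ∈ F) ∧
    ∀ x ∈ C, ∀ y ∈ C, x + y ∈ F → x ∈ F ∧ y ∈ F

/-- The supporting face of `f` in `C`: the smallest face of `C` containing `f`. -/
def IsSupportingFace (C : Set (Polynomial ℝ)) (f : Polynomial ℝ)
    (F : Set (Polynomial ℝ)) : Prop :=
  IsFace C F ∧ f ∈ F ∧ ∀ F', IsFace C F' → f ∈ F' → F ⊆ F'

lemma sign_aux {p q : ℝ[X]} {k : ℕ} {s a b : ℝ} (hab : a < b) (hs : s ∈ Set.Icc a b)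
    (hpq : p = (X - Polynomial.C s) ^ k * q) (hp : ∀ x ∈ Set.Icc a b, 0 ≤ p.eval x) :
    0 ≤ (if s < b then (1:ℝ) else -1) ^ k * q.eval s := by
  by_cases hsb : s < b
  · simp only [if_pos hsb, one_pow, one_mul]
    have h1 : Tendsto (fun x => q.eval x) (𝓝[>] s) (𝓝 (q.eval s)) :=
      (q.continuous.tendsto s).mono_left nhdsWithin_le_nhds
    refine ge_of_tendsto h1 ?_
    filter_upwards [Ioc_mem_nhdsGT_of_mem ⟨le_refl s, hsb⟩] with x hx
    have hx' : x ∈ Set.Icc a b := ⟨hs.1.trans hx.1.le, hx.2⟩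
    have h2 := hp x hx'
    rw [hpq, eval_mul, eval_pow, eval_sub, eval_X, eval_C] at h2
    have h3 : (0:ℝ) < (x - s) ^ k := pow_pos (sub_pos.2 hx.1) k
    exact (mul_nonneg_iff_of_pos_left h3).1 h2
  · have hsb' : s = b := le_antisymm hs.2 (not_lt.1 hsb)
    simp only [if_neg hsb]
    have h1 : Tendsto (fun x => (-1:ℝ)^k * q.eval x) (𝓝[<] s) (𝓝 ((-1:ℝ)^k * q.eval s)) :=
      (((continuous_const.mul q.continuous)).tendsto s).mono_left nhdsWithin_le_nhds
    refine ge_of_tendsto h1 ?_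
    filter_upwards [Ico_mem_nhdsLT_of_mem ⟨hsb' ▸ hab, le_refl s⟩] with x hx
    have hx' : x ∈ Set.Icc a b := ⟨hx.1, hsb' ▸ hx.2.le⟩
    have h2 := hp x hx'
    rw [hpq, eval_mul, eval_pow, eval_sub, eval_X, eval_C] at h2
    rw [show ((x:ℝ) - s) ^ k * q.eval x = (s - x)^k * ((-1:ℝ)^k * q.eval x) by
      rw [show (x:ℝ) - s = -(s - x) by ring, neg_pow]; ring] at h2
    have h3 : (0:ℝ) < (s - x) ^ k := pow_pos (sub_pos.2 hx.2) k
    exact (mul_nonneg_iff_of_pos_left h3).1 h2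

theorem stmt_2 (V : Submodule ℝ (Polynomial ℝ)) [FiniteDimensional ℝ V]
    (a b : ℝ) (hab : a < b) (f : ℝ[X]) (hfV : f ∈ V) (hf0 : f ≠ 0)
    (hfP : ∀ x ∈ Set.Icc a b, 0 ≤ f.eval x) (F : Set ℝ[X])
    (hF : IsSupportingFace
      {g : ℝ[X] | g ∈ V ∧ ∀ x ∈ Set.Icc a b, 0 ≤ g.eval x} f F) :
    (Submodule.span ℝ F : Set ℝ[X]) =
      {g : ℝ[X] | g ∈ V ∧ ∀ s ∈ Set.Icc a b,
        (X - C s) ^ (rootMultiplicity s f) ∣ g} := by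
  classical
  set P : Set ℝ[X] := {g : ℝ[X] | g ∈ V ∧ ∀ x ∈ Set.Icc a b, 0 ≤ g.eval x} with hPdef
  have hPadd : ∀ x ∈ P, ∀ y ∈ P, x + y ∈ P := by
    rintro x ⟨hxV, hx⟩ y ⟨hyV, hy⟩
    exact ⟨V.add_mem hxV hyV, fun t ht => by
      simpa using add_nonneg (hx t ht) (hy t ht)⟩
  have hPsmul : ∀ c : ℝ, 0 ≤ c → ∀ x ∈ P, c • x ∈ P := by
    rintro c hc x ⟨hxV, hx⟩
    exact ⟨V.smul_mem c hxV, fun t ht => by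
      simpa using mul_nonneg hc (hx t ht)⟩
  have hfP' : f ∈ P := ⟨hfV, hfP⟩
  set F₀ : Set ℝ[X] := {g | g ∈ P ∧ ∃ c : ℝ, 0 < c ∧ c • f - g ∈ P} with hF₀def
  have hface : IsFace P F₀ := by
    refine ⟨fun g hg => hg.1, ?_, ?_, ?_⟩
    · rintro c hc x ⟨hxP, d, hd, hdx⟩
      refine ⟨hPsmul c hc x hxP, ?_⟩
      rcases eq_or_lt_of_le hc with rfl | hc'
      · exact ⟨1, one_pos, by simpa using hfP'⟩
      · refine ⟨c * d, mul_pos hc' hd, ?_⟩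
        have := hPsmul c hc'.le _ hdx
        simpa [smul_sub, mul_smul] using this
    · rintro x ⟨hxP, d₁, hd₁, hx⟩ y ⟨hyP, d₂, hd₂, hy⟩
      refine ⟨hPadd x hxP y hyP, d₁ + d₂, add_pos hd₁ hd₂, ?_⟩
      have := hPadd _ hx _ hy
      have heq : d₁ • f - x + (d₂ • f - y) = (d₁ + d₂) • f - (x + y) := by
        rw [add_smul]; abel
      rwa [heq] at this
    · rintro x hxP y hyP ⟨hxyP, d, hd, hdxy⟩
      have h1 : d • f - x - y ∈ P := by
        rwa [show d • f - x - y = d • f - (x + y) by abel]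
      have hx' : d • f - x ∈ P := by
        have := hPadd _ h1 _ hyP
        rwa [show d • f - x - y + y = d • f - x by abel] at this
      have hy' : d • f - y ∈ P := by
        have h1' : d • f - y - x ∈ P := by
          rwa [show d • f - y - x = d • f - x - y by abel]
        have := hPadd _ h1' _ hxP
        rwa [show d • f - y - x + x = d • f - y by abel] at this
      exact ⟨⟨hxP, d, hd, hx'⟩, ⟨hyP, d, hd, hy'⟩⟩
  have hfF₀ : f ∈ F₀ := ⟨hfP', 2, two_pos, by
    rw [show (2:ℝ) • f - f = f by rw [two_smul]; abel]
    exact hfP'⟩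
  have hFsub : F ⊆ F₀ := hF.2.2 F₀ hface hfF₀
  -- the submodule W
  set W : Submodule ℝ ℝ[X] :=
    V ⊓ ⨅ s ∈ Set.Icc a b,
      (Ideal.span {(X - Polynomial.C s) ^ (rootMultiplicity s f)}).restrictScalars ℝ with hWdef
  have hWmem : ∀ g : ℝ[X], g ∈ W ↔ (g ∈ V ∧ ∀ s ∈ Set.Icc a b,
      (X - Polynomial.C s) ^ (rootMultiplicity s f) ∣ g) := by
    intro g
    simp [hWdef, Submodule.mem_inf, Submodule.mem_iInf, Ideal.mem_span_singleton]
  -- direction A : F₀ ⊆ W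
  have hA : ∀ g ∈ F₀, ∀ s ∈ Set.Icc a b,
      (X - Polynomial.C s) ^ (rootMultiplicity s f) ∣ g := by
    rintro g ⟨⟨hgV, hg⟩, c, hc, hcf⟩ s hsI
    by_cases hg0 : g = 0
    · simp [hg0]
    set k := rootMultiplicity s g with hk
    by_cases hkm : rootMultiplicity s f ≤ k
    · exact dvd_trans (pow_dvd_pow _ hkm) (pow_rootMultiplicity_dvd g s)
    push_neg at hkm
    exfalso
    set g₁ := g /ₘ (X - Polynomial.C s) ^ k with hg₁def
    have hgfac : g = (X - Polynomial.C s) ^ k * g₁ :=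
      (pow_mul_divByMonic_rootMultiplicity_eq g s).symm
    have hg₁ : g₁.eval s ≠ 0 := eval_divByMonic_pow_rootMultiplicity_ne_zero s hg0
    obtain ⟨f₁, hf₁⟩ : (X - Polynomial.C s) ^ (k + 1) ∣ f :=
      dvd_trans (pow_dvd_pow _ hkm) (pow_rootMultiplicity_dvd f s)
    set h₁ : ℝ[X] := Polynomial.C c * ((X - Polynomial.C s) * f₁) - g₁ with hh₁def
    have hhfac : c • f - g = (X - Polynomial.C s) ^ k * h₁ := by
      rw [smul_eq_C_mul, hf₁, hgfac, hh₁def]; ring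
    have e1 := sign_aux hab hsI hgfac hg
    have e2 := sign_aux hab hsI hhfac hcf.2
    have hh₁s : h₁.eval s = - g₁.eval s := by
      simp [hh₁def]
    rw [hh₁s, mul_neg] at e2
    have hz : (if s < b then (1:ℝ) else -1) ^ k * g₁.eval s = 0 := le_antisymm (by linarith) e1
    have hd : ((if s < b then (1:ℝ) else -1)) ^ k ≠ 0 := by
      split_ifs <;> simp
    exact hg₁ ((mul_eq_zero.1 hz).resolve_left hd)
  have hspan : Submodule.span ℝ F ≤ W := by
    rw [Submodule.span_le]
    intro g hgF
    rw [SetLike.mem_coe, hWmem]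
    have hg₀ : g ∈ F₀ := hFsub hgF
    exact ⟨hg₀.1.1, hA g hg₀⟩
  -- direction B
  have hB : ∀ g : ℝ[X], g ∈ V →
      (∀ s ∈ Set.Icc a b, (X - Polynomial.C s) ^ (rootMultiplicity s f) ∣ g) →
      g ∈ Submodule.span ℝ F := by
    intro g hgV hgdvd
    set T : Finset ℝ := f.roots.toFinset.filter (fun s => s ∈ Set.Icc a b) with hT
    set p : ℝ[X] := ∏ s ∈ T, (X - Polynomial.C s) ^ (rootMultiplicity s f) with hp
    have hcop : (T : Set ℝ).Pairwise
        (Function.onFun IsCoprime fun s => (X - Polynomial.C s) ^ (rootMultiplicity s f)) := by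
      intro x _ y _ hxy
      exact (Polynomial.pairwise_coprime_X_sub_C (Function.injective_id) hxy).pow
    have hpf : p ∣ f := Finset.prod_dvd_of_coprime hcop fun s _ => pow_rootMultiplicity_dvd f s
    have hpg : p ∣ g := Finset.prod_dvd_of_coprime hcop fun s hs =>
      hgdvd s (Finset.mem_filter.1 hs).2
    obtain ⟨q, hq⟩ := hpf
    obtain ⟨r, hr⟩ := hpg
    have hq0 : ∀ s ∈ Set.Icc a b, q.eval s ≠ 0 := by
      intro s hs hqs
      have h1 : (X - Polynomial.C s) ∣ q := dvd_iff_isRoot.mpr hqs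
      have h2 : (X - Polynomial.C s) ^ (rootMultiplicity s f) ∣ p := by
        by_cases hsT : s ∈ T
        · exact Finset.dvd_prod_of_mem _ hsT
        · have hfs : f.eval s ≠ 0 := by
            intro h0
            exact hsT (Finset.mem_filter.2
              ⟨Multiset.mem_toFinset.2 ((mem_roots hf0).2 h0), hs⟩)
          rw [rootMultiplicity_eq_zero hfs, pow_zero]
          exact one_dvd p
      have h3 : (X - Polynomial.C s) ^ (rootMultiplicity s f + 1) ∣ f := by
        have : (X - Polynomial.C s) ^ (rootMultiplicity s f + 1) ∣ p * q := by
          rw [pow_succ]; exact mul_dvd_mul h2 h1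
        rwa [← hq] at this
      have := (le_rootMultiplicity_iff hf0).mpr h3
      omega
    obtain ⟨s₀, hs₀I, hs₀⟩ := isCompact_Icc.exists_isMinOn (Set.nonempty_Icc.2 hab.le)
      ((continuous_abs.comp q.continuous).continuousOn)
    obtain ⟨s₁, hs₁I, hs₁⟩ := isCompact_Icc.exists_isMaxOn (Set.nonempty_Icc.2 hab.le)
      ((continuous_abs.comp r.continuous).continuousOn)
    set δ : ℝ := |q.eval s₀| with hδdef
    have hδ : 0 < δ := abs_pos.2 (hq0 s₀ hs₀I)
    set M : ℝ := |r.eval s₁| with hMdef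
    have hM : 0 ≤ M := abs_nonneg _
    have hbound : ∀ x ∈ Set.Icc a b, δ * |g.eval x| ≤ M * f.eval x := by
      intro x hx
      have h1 : |g.eval x| = |p.eval x| * |r.eval x| := by
        rw [hr, eval_mul, abs_mul]
      have h2 : f.eval x = |p.eval x| * |q.eval x| := by
        rw [← abs_mul, ← eval_mul, ← hq, abs_of_nonneg (hfP x hx)]
      have h3 : |r.eval x| ≤ M := hs₁ hx
      have h4 : δ ≤ |q.eval x| := hs₀ hx
      rw [h1, h2]
      have h5 : |p.eval x| * (δ * |r.eval x|) ≤ |p.eval x| * (|q.eval x| * M) :=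
        mul_le_mul_of_nonneg_left
          (mul_le_mul h4 h3 (abs_nonneg _) (abs_nonneg _)) (abs_nonneg _)
      nlinarith [h5]
    set ε : ℝ := δ / (M + 1) with hεdef
    have hε : 0 < ε := div_pos hδ (by linarith)
    have hkey : ∀ x ∈ Set.Icc a b, ε * |g.eval x| ≤ f.eval x := by
      intro x hx
      have h1 := hbound x hx
      have h2 := hfP x hx
      rw [hεdef, div_mul_eq_mul_div, div_le_iff₀ (by linarith : (0:ℝ) < M + 1)]
      nlinarith
    have hmem₁ : f + ε • g ∈ P := by
      refine ⟨V.add_mem hfV (V.smul_mem ε hgV), fun x hx => ?_⟩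
      have h1 := hkey x hx
      have h2 : ε * -|g.eval x| ≤ ε * g.eval x :=
        mul_le_mul_of_nonneg_left (neg_abs_le _) hε.le
      simp only [eval_add, eval_smul, smul_eq_mul]
      linarith
    have hmem₂ : f - ε • g ∈ P := by
      refine ⟨V.sub_mem hfV (V.smul_mem ε hgV), fun x hx => ?_⟩
      have h1 := hkey x hx
      simp only [eval_sub, eval_smul, smul_eq_mul]
      linarith [mul_le_mul_of_nonneg_left (le_abs_self (g.eval x)) hε.le]
    have h2f : f + f ∈ F := hF.1.2.2.1 f hF.2.1 f hF.2.1
    have hface' := hF.1.2.2.2 _ hmem₁ _ hmem₂ (by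
      rw [show (f + ε • g) + (f - ε • g) = f + f by abel]
      exact h2f)
    have hin₁ : (f + ε • g) ∈ Submodule.span ℝ F := Submodule.subset_span hface'.1
    have hin₂ : (f - ε • g) ∈ Submodule.span ℝ F := Submodule.subset_span hface'.2
    have hsub := Submodule.sub_mem _ hin₁ hin₂
    have heq : (f + ε • g) - (f - ε • g) = (2 * ε) • g := by
      rw [mul_smul, two_smul]; abel
    rw [heq] at hsub
    have := Submodule.smul_mem (Submodule.span ℝ F) (2 * ε)⁻¹ hsub
    rwa [inv_smul_smul₀ (by positivity) g] at this
  ext g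
  simp only [SetLike.mem_coe, Set.mem_setOf_eq]
  constructor
  · intro hg
    exact (hWmem g).1 (hspan hg)
  · rintro ⟨hgV, hgdvd⟩
    exact hB g hgV hgdvd
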